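/- arXiv:1112.0098 — 2 statements merged into one kernel-verified Lean document; each statement's English description precedes it below -/
import Mathlib

section
/- If f : (0,∞) → ℝ is nonnegative and n-matrix concave for some n ≥ 1, then f is n-matrix monotone. -/
open Matrix Set
open scoped ComplexOrder

noncomputable section

/-- `f` is `n`-matrix monotone on `I`. -/
def MatMonoOn (n : ℕ) (I : Set ℝ) (f : ℝ → ℝ) : Prop :=
  ∀ (A B : Matrix (Fin n) (Fin n) ℂ) (hA : A.IsHermitian) (hB : B.IsHermitian),
    (∀ i, hA.eigenvalues i ∈ I) → (∀ i, hB.eigenvalues i ∈ I) →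
    (B - A).PosSemidef → (hB.cfc f - hA.cfc f).PosSemidef

/-- `f` is `n`-matrix concave on `I`. -/
def MatConcaveOn (n : ℕ) (I : Set ℝ) (f : ℝ → ℝ) : Prop :=
  ∀ (A B : Matrix (Fin n) (Fin n) ℂ) (hA : A.IsHermitian) (hB : B.IsHermitian)
    (s : ℝ), s ∈ Icc (0:ℝ) 1 →
    (∀ i, hA.eigenvalues i ∈ I) → (∀ i, hB.eigenvalues i ∈ I) →
    ∀ (hC : ((s:ℂ) • A + ((1:ℂ) - (s:ℂ)) • B).IsHermitian),
      (hC.cfc f - ((s:ℂ) • hA.cfc f + ((1:ℂ) - (s:ℂ)) • hB.cfc f)).PosSemidef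

/-- `f` is `n`-matrix convex on `I`. -/
def MatConvexOn (n : ℕ) (I : Set ℝ) (f : ℝ → ℝ) : Prop :=
  ∀ (A B : Matrix (Fin n) (Fin n) ℂ) (hA : A.IsHermitian) (hB : B.IsHermitian)
    (s : ℝ), s ∈ Icc (0:ℝ) 1 →
    (∀ i, hA.eigenvalues i ∈ I) → (∀ i, hB.eigenvalues i ∈ I) →
    ∀ (hC : ((s:ℂ) • A + ((1:ℂ) - (s:ℂ)) • B).IsHermitian),
      (((s:ℂ) • hA.cfc f + ((1:ℂ) - (s:ℂ)) • hB.cfc f) - hC.cfc f).PosSemidef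

/-- First divided difference. -/
def dd (f : ℝ → ℝ) (t s : ℝ) : ℝ :=
  if t = s then deriv f t else (f t - f s) / (t - s)

/-- Second divided difference. -/
def dd2 (f : ℝ → ℝ) (t s r : ℝ) : ℝ :=
  if t = s then
    (if s = r then deriv (deriv f) t / 2 else (deriv f t - dd f t r) / (t - r))
  else if t = r then (deriv f t - dd f t s) / (t - s)
  else (dd f t s - dd f s r) / (t - r)

section AuxiliaryLemmas

open Filter Topology Polynomial

variable {n : ℕ}

/-- Positive semidefiniteness passes to limits. -/
private lemma psd_limit {α : Type*} {l : Filter α} [l.NeBot]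
    {D : α → Matrix (Fin n) (Fin n) ℂ} {M : Matrix (Fin n) (Fin n) ℂ}
    (h : Filter.Tendsto D l (nhds M)) (hD : ∀ᶠ x in l, (D x).PosSemidef) :
    M.PosSemidef := by
  rw [posSemidef_iff_dotProduct_mulVec]
  constructor
  · have h1 : Filter.Tendsto (fun x => (D x)ᴴ) l (nhds Mᴴ) :=
      ((continuous_id.matrix_conjTranspose (R := ℂ)).tendsto M).comp h
    have h2 : Filter.Tendsto (fun x => (D x)ᴴ) l (nhds M) := by
      refine h.congr' ?_
      filter_upwards [hD] with x hx
      exact hx.1.symm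
    exact tendsto_nhds_unique h1 h2
  · intro x
    have hcont : Continuous (fun N : Matrix (Fin n) (Fin n) ℂ => star x ⬝ᵥ N *ᵥ x) :=
      continuous_const.dotProduct (continuous_id.matrix_mulVec continuous_const)
    have ht : Filter.Tendsto (fun a => star x ⬝ᵥ (D a) *ᵥ x) l (nhds (star x ⬝ᵥ M *ᵥ x)) :=
      (hcont.tendsto M).comp h
    have hcl : IsClosed {z : ℂ | 0 ≤ z} := by
      have he : {z : ℂ | 0 ≤ z} = Complex.re ⁻¹' (Ici 0) ∩ Complex.im ⁻¹' {0} := by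
        ext z
        simp only [mem_setOf_eq, Complex.le_def, mem_inter_iff, mem_preimage, mem_Ici,
          mem_singleton_iff, Complex.zero_re, Complex.zero_im]
        tauto
      rw [he]
      exact (isClosed_Ici.preimage Complex.continuous_re).inter
        (isClosed_singleton.preimage Complex.continuous_im)
    exact hcl.mem_of_tendsto ht (hD.mono fun a ha => ha.dotProduct_mulVec_nonneg x)

private lemma spec_subset_of_eig {A : Matrix (Fin n) (Fin n) ℂ} (hA : A.IsHermitian)
    {S : Set ℝ} (h : ∀ i, hA.eigenvalues i ∈ S) : spectrum ℝ A ⊆ S := by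
  rw [Matrix.IsHermitian.spectrum_real_eq_range_eigenvalues hA]
  rintro - ⟨i, rfl⟩
  exact h i

private lemma eig_mem_of_spec {A : Matrix (Fin n) (Fin n) ℂ} (hA : A.IsHermitian)
    {S : Set ℝ} (h : spectrum ℝ A ⊆ S) : ∀ i, hA.eigenvalues i ∈ S := fun i =>
  h (by rw [Matrix.IsHermitian.spectrum_real_eq_range_eigenvalues hA]; exact ⟨i, rfl⟩)

private lemma spec_smul_subset {A : Matrix (Fin n) (Fin n) ℂ} {r : ℝ} (hr : 0 < r)
    (h : spectrum ℝ A ⊆ Ioi 0) : spectrum ℝ (r • A) ⊆ Ioi (0:ℝ) := by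
  have he := spectrum.unit_smul_eq_smul (a := A) (r := Units.mk0 r hr.ne')
  have he2 : (Units.mk0 r hr.ne') • A = r • A := rfl
  rw [he2] at he
  rw [he]
  rintro - ⟨x, hx, rfl⟩
  have : (0:ℝ) < r * x := mul_pos hr (h hx)
  simpa [Units.smul_def] using this

private lemma herm_smul_one (r : ℝ) : ((r : ℝ) • (1 : Matrix (Fin n) (Fin n) ℂ)).IsHermitian := by
  have h : IsSelfAdjoint ((r : ℝ) • (1 : Matrix (Fin n) (Fin n) ℂ)) :=
    IsSelfAdjoint.smul (star_trivial r) (.one _)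
  exact h

private lemma psd_coe_smul_cfc {A : Matrix (Fin n) (Fin n) ℂ} (hA : A.IsHermitian)
    {f : ℝ → ℝ} {c : ℝ} (hc : 0 ≤ c) (hf : ∀ i, 0 ≤ f (hA.eigenvalues i)) :
    ((c : ℂ) • hA.cfc f).PosSemidef := by
  rw [Matrix.IsHermitian.cfc, Unitary.conjStarAlgAut_apply]
  rw [← smul_mul_assoc, ← mul_smul_comm, ← diagonal_smul]
  rw [show star (hA.eigenvectorUnitary : Matrix (Fin n) (Fin n) ℂ)
      = (hA.eigenvectorUnitary : Matrix (Fin n) (Fin n) ℂ)ᴴ from rfl]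
  refine Matrix.PosSemidef.mul_mul_conjTranspose_same ?_ _
  refine Matrix.posSemidef_diagonal_iff.mpr fun i => ?_
  have h0 : (0:ℂ) ≤ ((c:ℂ) * ((f (hA.eigenvalues i) : ℝ) : ℂ)) := by
    rw [← Complex.ofReal_mul]
    exact Complex.zero_le_real.mpr (mul_nonneg hc (hf i))
  simpa [Pi.smul_apply, Function.comp, smul_eq_mul] using h0

private lemma cfc_smul_eq {A : Matrix (Fin n) (Fin n) ℂ} (hA : A.IsHermitian) (f : ℝ → ℝ) (r : ℝ)
    (hA' : ((r:ℝ) • A).IsHermitian) :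
    hA'.cfc f = hA.cfc (fun x => f (r * x)) := by
  rw [← Matrix.IsHermitian.cfc_eq hA', ← Matrix.IsHermitian.cfc_eq hA]
  exact (cfc_comp_const_mul r f A
    (((Matrix.finite_real_spectrum (A := A)).image _).continuousOn f) hA).symm

private lemma cfc_shift_eq {A : Matrix (Fin n) (Fin n) ℂ} (hA : A.IsHermitian) (f : ℝ → ℝ) (r : ℝ)
    (hA' : (A + (r:ℝ) • 1).IsHermitian) :
    hA'.cfc f = hA.cfc (fun x => f (x + r)) := by
  rw [← Matrix.IsHermitian.cfc_eq hA', ← Matrix.IsHermitian.cfc_eq hA]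
  have h2 := cfc_comp_polynomial (Polynomial.X + Polynomial.C r) f A
    (((Matrix.finite_real_spectrum (A := A)).image _).continuousOn f) hA
  have hfun : (fun x : ℝ => f ((Polynomial.X + Polynomial.C r).eval x)) = fun x => f (x + r) := by
    funext x; simp
  rw [hfun] at h2
  have h1 : A + (r:ℝ) • (1 : Matrix (Fin n) (Fin n) ℂ)
      = Polynomial.aeval A (Polynomial.X + Polynomial.C r) := by
    simp [map_add, Polynomial.aeval_X, Polynomial.aeval_C, Algebra.algebraMap_eq_smul_one]
  rw [show cfc f (A + (r:ℝ) • (1 : Matrix (Fin n) (Fin n) ℂ))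
      = cfc f (Polynomial.aeval A (Polynomial.X + Polynomial.C r)) from by rw [← h1]]
  exact h2.symm

private lemma scalar_concave {n : ℕ} (hn : 1 ≤ n) {f : ℝ → ℝ}
    (hf : MatConcaveOn n (Ioi 0) f) : ConcaveOn ℝ (Ioi 0) f := by
  haveI : NeZero n := ⟨by omega⟩
  haveI : Nonempty (Fin n) := ⟨⟨0, by omega⟩⟩
  refine ⟨convex_Ioi 0, fun a ha b hb p q hp hq hpq => ?_⟩
  have hq' : q = 1 - p := by linarith
  subst hq'
  set Ma : Matrix (Fin n) (Fin n) ℂ := algebraMap ℝ _ a with hMa_def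
  set Mb : Matrix (Fin n) (Fin n) ℂ := algebraMap ℝ _ b with hMb_def
  have hMa : Ma.IsHermitian := (IsSelfAdjoint.algebraMap _ (IsSelfAdjoint.all a) :
    IsSelfAdjoint Ma)
  have hMb : Mb.IsHermitian := (IsSelfAdjoint.algebraMap _ (IsSelfAdjoint.all b) :
    IsSelfAdjoint Mb)
  have specMa : spectrum ℝ Ma = {a} :=
    CFC.spectrum_algebraMap_eq (p := (IsSelfAdjoint : Matrix (Fin n) (Fin n) ℂ → Prop)) a
  have specMb : spectrum ℝ Mb = {b} :=
    CFC.spectrum_algebraMap_eq (p := (IsSelfAdjoint : Matrix (Fin n) (Fin n) ℂ → Prop)) b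
  have eigMa : ∀ i, hMa.eigenvalues i ∈ Ioi (0:ℝ) :=
    eig_mem_of_spec hMa (by rw [specMa]; simpa using ha)
  have eigMb : ∀ i, hMb.eigenvalues i ∈ Ioi (0:ℝ) :=
    eig_mem_of_spec hMb (by rw [specMb]; simpa using hb)
  have key : (p:ℂ) • Ma + ((1:ℂ) - (p:ℂ)) • Mb
      = algebraMap ℝ (Matrix (Fin n) (Fin n) ℂ) (p * a + (1-p) * b) := by
    ext i j
    simp only [hMa_def, hMb_def, Matrix.add_apply, Matrix.smul_apply,
      Matrix.algebraMap_matrix_apply, smul_eq_mul]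
    split_ifs
    · simp only [Complex.coe_algebraMap]; push_cast; ring
    · simp
  have hComb : ((p:ℂ) • Ma + ((1:ℂ) - (p:ℂ)) • Mb).IsHermitian := by
    rw [key]
    exact (IsSelfAdjoint.algebraMap (Matrix (Fin n) (Fin n) ℂ)
      (IsSelfAdjoint.all (p * a + (1-p) * b)) :
      IsSelfAdjoint (algebraMap ℝ (Matrix (Fin n) (Fin n) ℂ) (p * a + (1-p) * b)))
  have main := hf Ma Mb hMa hMb p ⟨hp, by linarith⟩ eigMa eigMb hComb
  have ea : hMa.cfc f = algebraMap ℝ (Matrix (Fin n) (Fin n) ℂ) (f a) := by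
    rw [← Matrix.IsHermitian.cfc_eq hMa, hMa_def, cfc_algebraMap]
  have eb : hMb.cfc f = algebraMap ℝ (Matrix (Fin n) (Fin n) ℂ) (f b) := by
    rw [← Matrix.IsHermitian.cfc_eq hMb, hMb_def, cfc_algebraMap]
  have ec : hComb.cfc f = algebraMap ℝ (Matrix (Fin n) (Fin n) ℂ) (f (p * a + (1-p) * b)) := by
    rw [← Matrix.IsHermitian.cfc_eq hComb]
    rw [show cfc f ((p:ℂ) • Ma + ((1:ℂ) - (p:ℂ)) • Mb)
        = cfc f (algebraMap ℝ (Matrix (Fin n) (Fin n) ℂ) (p * a + (1-p) * b)) from by rw [key]]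
    rw [cfc_algebraMap]
  rw [ea, eb, ec] at main
  have key2 : algebraMap ℝ (Matrix (Fin n) (Fin n) ℂ) (f (p * a + (1-p) * b)) -
      ((p:ℂ) • algebraMap ℝ (Matrix (Fin n) (Fin n) ℂ) (f a)
        + ((1:ℂ) - (p:ℂ)) • algebraMap ℝ (Matrix (Fin n) (Fin n) ℂ) (f b))
      = algebraMap ℝ (Matrix (Fin n) (Fin n) ℂ)
          (f (p * a + (1-p) * b) - (p * f a + (1-p) * f b)) := by
    ext i j
    simp only [Matrix.sub_apply, Matrix.add_apply, Matrix.smul_apply,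
      Matrix.algebraMap_matrix_apply, smul_eq_mul]
    split_ifs
    · simp only [Complex.coe_algebraMap]; push_cast; ring
    · simp
  rw [key2] at main
  set d : ℝ := f (p * a + (1-p) * b) - (p * f a + (1-p) * f b) with hd
  have hHd := main.1
  have hmem : hHd.eigenvalues ⟨0, by omega⟩ ∈ spectrum ℝ
      (algebraMap ℝ (Matrix (Fin n) (Fin n) ℂ) d) := by
    rw [Matrix.IsHermitian.spectrum_real_eq_range_eigenvalues hHd]; exact ⟨_, rfl⟩
  rw [CFC.spectrum_algebraMap_eq (p := (IsSelfAdjoint : Matrix (Fin n) (Fin n) ℂ → Prop)) d,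
    mem_singleton_iff] at hmem
  have h0 : 0 ≤ d := hmem ▸ main.eigenvalues_nonneg ⟨0, by omega⟩
  simp only [smul_eq_mul]
  rw [hd] at h0
  linarith

end AuxiliaryLemmas

open Filter Topology

theorem stmt1 (n : ℕ) (hn : 1 ≤ n) (f : ℝ → ℝ)
    (hpos : ∀ t ∈ Ioi (0:ℝ), 0 ≤ f t)
    (hf : MatConcaveOn n (Ioi 0) f) : MatMonoOn n (Ioi 0) f := by
  intro A B hA hB hAe hBe hBA
  have contf : ContinuousOn f (Ioi 0) := (scalar_concave hn hf).continuousOn isOpen_Ioi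
  have specA : spectrum ℝ A ⊆ Ioi 0 := spec_subset_of_eig hA hAe
  have specB : spectrum ℝ B ⊆ Ioi 0 := spec_subset_of_eig hB hBe
  have rc : ∀ (r : ℝ) (M : Matrix (Fin n) (Fin n) ℂ), (r:ℂ) • M = r • M := fun r M =>
    algebraMap_smul ℂ r M
  -- the key pointwise estimate
  have claim : ∀ l ∈ Ioo (0:ℝ) 1,
      (hB.cfc (fun x => f (x + (1 - l))) - (l:ℂ) • hA.cfc (fun x => f (l⁻¹ * x))).PosSemidef := by
    rintro l ⟨hl0, hl1⟩
    have hε : (0:ℝ) < 1 - l := by linarith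
    have hA' : ((l⁻¹ : ℝ) • A).IsHermitian :=
      (IsSelfAdjoint.smul (star_trivial _) (hA : IsSelfAdjoint A) : IsSelfAdjoint _)
    have specA' : spectrum ℝ ((l⁻¹ : ℝ) • A) ⊆ Ioi 0 := spec_smul_subset (inv_pos.mpr hl0) specA
    have eigA' := eig_mem_of_spec hA' specA'
    have h1pd : ((1 - l : ℝ) • (1 : Matrix (Fin n) (Fin n) ℂ)).PosDef := by
      have e : (1 - l : ℝ) • (1 : Matrix (Fin n) (Fin n) ℂ)
          = Matrix.diagonal (fun _ : Fin n => ((1 - l : ℝ) : ℂ)) := by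
        ext i j
        by_cases h : i = j
        · subst h; simp [Matrix.one_apply, Complex.real_smul]
        · simp [Matrix.one_apply, Matrix.diagonal_apply_ne _ h, h]
      rw [e]
      exact Matrix.posDef_diagonal_iff.mpr fun i => Complex.zero_lt_real.mpr hε
    set D : Matrix (Fin n) (Fin n) ℂ := B - A + (1 - l : ℝ) • 1 with hD_def
    have hDpd : D.PosDef := Matrix.PosDef.posSemidef_add hBA h1pd
    have specD : spectrum ℝ D ⊆ Ioi 0 := by
      rw [Matrix.IsHermitian.spectrum_real_eq_range_eigenvalues hDpd.isHermitian]
      rintro - ⟨i, rfl⟩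
      exact hDpd.eigenvalues_pos i
    have hC' : (((1-l)⁻¹ : ℝ) • D).IsHermitian :=
      (IsSelfAdjoint.smul (star_trivial _) (hDpd.isHermitian : IsSelfAdjoint D) :
        IsSelfAdjoint _)
    have specC : spectrum ℝ (((1-l)⁻¹ : ℝ) • D) ⊆ Ioi 0 := spec_smul_subset (inv_pos.mpr hε) specD
    have eigC := eig_mem_of_spec hC' specC
    have e1 : (l:ℂ) • ((l⁻¹ : ℝ) • A) = A := by
      rw [rc, smul_smul, mul_inv_cancel₀ hl0.ne', one_smul]
    have hcast : ((1:ℂ) - (l:ℂ)) = ((1 - l : ℝ) : ℂ) := by push_cast; ring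
    have e2 : ((1:ℂ) - (l:ℂ)) • (((1-l)⁻¹ : ℝ) • D) = D := by
      rw [hcast, rc, smul_smul, mul_inv_cancel₀ hε.ne', one_smul]
    have key : (l:ℂ) • ((l⁻¹ : ℝ) • A) + ((1:ℂ) - (l:ℂ)) • (((1-l)⁻¹ : ℝ) • D)
        = B + (1 - l : ℝ) • 1 := by
      rw [e1, e2, hD_def]
      abel
    have hB1 : (B + (1 - l : ℝ) • 1).IsHermitian := hB.add (herm_smul_one (1-l))
    have hM : ((l:ℂ) • ((l⁻¹ : ℝ) • A) + ((1:ℂ) - (l:ℂ)) • (((1-l)⁻¹ : ℝ) • D)).IsHermitian := by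
      rw [key]; exact hB1
    have main := hf _ _ hA' hC' l ⟨hl0.le, hl1.le⟩ eigA' eigC hM
    have eB : hM.cfc f = hB.cfc (fun x => f (x + (1-l))) := by
      rw [← Matrix.IsHermitian.cfc_eq hM,
        show cfc f ((l:ℂ) • ((l⁻¹ : ℝ) • A) + ((1:ℂ) - (l:ℂ)) • (((1-l)⁻¹ : ℝ) • D))
          = cfc f (B + (1 - l : ℝ) • 1) from by rw [key],
        Matrix.IsHermitian.cfc_eq hB1]
      exact cfc_shift_eq hB f (1-l) hB1
    have eA : hA'.cfc f = hA.cfc (fun x => f (l⁻¹ * x)) := cfc_smul_eq hA f l⁻¹ hA'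
    have psdY : (((1:ℂ) - (l:ℂ)) • hC'.cfc f).PosSemidef := by
      rw [hcast]
      exact psd_coe_smul_cfc hC' hε.le fun i => hpos _ (eigC i)
    have sum := main.add psdY
    have ealg : hM.cfc f - ((l:ℂ) • hA'.cfc f + ((1:ℂ) - (l:ℂ)) • hC'.cfc f)
        + ((1:ℂ) - (l:ℂ)) • hC'.cfc f = hM.cfc f - (l:ℂ) • hA'.cfc f := by abel
    rw [ealg, eB, eA] at sum
    exact sum
  -- pass to the limit l → 1⁻
  set L : Filter ℝ := nhdsWithin (1:ℝ) (Iio 1) with hL_def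
  haveI : L.NeBot := nhdsLT_neBot 1
  set UB : Matrix (Fin n) (Fin n) ℂ := (hB.eigenvectorUnitary : Matrix (Fin n) (Fin n) ℂ)
    with hUB_def
  set UA : Matrix (Fin n) (Fin n) ℂ := (hA.eigenvectorUnitary : Matrix (Fin n) (Fin n) ℂ)
    with hUA_def
  have contPhiB : Continuous (fun v : Fin n → ℝ =>
      UB * Matrix.diagonal (RCLike.ofReal ∘ v) * star UB) := by
    refine (continuous_const.matrix_mul ?_).matrix_mul continuous_const
    exact Continuous.matrix_diagonal
      (continuous_pi fun i => (RCLike.continuous_ofReal).comp (continuous_apply i))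
  have contPhiA : Continuous (fun v : Fin n → ℝ =>
      UA * Matrix.diagonal (RCLike.ofReal ∘ v) * star UA) := by
    refine (continuous_const.matrix_mul ?_).matrix_mul continuous_const
    exact Continuous.matrix_diagonal
      (continuous_pi fun i => (RCLike.continuous_ofReal).comp (continuous_apply i))
  have hvB : Filter.Tendsto (fun l => (fun i => f (hB.eigenvalues i + (1 - l)))) L
      (nhds (fun i => f (hB.eigenvalues i))) := by
    rw [tendsto_pi_nhds]
    intro i
    have hmem : hB.eigenvalues i ∈ Ioi (0:ℝ) := hBe i
    have path : Filter.Tendsto (fun l : ℝ => hB.eigenvalues i + (1 - l)) L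
        (nhdsWithin (hB.eigenvalues i) (Ioi 0)) := by
      rw [tendsto_nhdsWithin_iff]
      constructor
      · have hb : Filter.Tendsto (fun l : ℝ => hB.eigenvalues i + (1 - l)) (nhds 1)
            (nhds (hB.eigenvalues i + (1 - 1))) :=
          (continuous_const.add (continuous_const.sub continuous_id)).tendsto 1
        simpa using hb.mono_left nhdsWithin_le_nhds
      · filter_upwards [self_mem_nhdsWithin] with x hx
        exact add_pos (mem_Ioi.mp hmem) (sub_pos.mpr (mem_Iio.mp hx))
    exact (contf _ hmem).tendsto.comp path
  have hvA : Filter.Tendsto (fun l => (fun i => f (l⁻¹ * hA.eigenvalues i))) L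
      (nhds (fun i => f (hA.eigenvalues i))) := by
    rw [tendsto_pi_nhds]
    intro i
    have hmem : hA.eigenvalues i ∈ Ioi (0:ℝ) := hAe i
    have hev0 : ∀ᶠ x in L, x ∈ Ioi (0:ℝ) :=
      Filter.Eventually.filter_mono nhdsWithin_le_nhds
        (isOpen_Ioi.eventually_mem (by norm_num : (1:ℝ) ∈ Ioi 0))
    have path : Filter.Tendsto (fun l : ℝ => l⁻¹ * hA.eigenvalues i) L
        (nhdsWithin (hA.eigenvalues i) (Ioi 0)) := by
      rw [tendsto_nhdsWithin_iff]
      constructor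
      · have hb : Filter.Tendsto (fun l : ℝ => l⁻¹ * hA.eigenvalues i) (nhds 1)
            (nhds ((1:ℝ)⁻¹ * hA.eigenvalues i)) :=
          ((continuous_id.tendsto 1).inv₀ one_ne_zero).mul_const _
        simpa using hb.mono_left nhdsWithin_le_nhds
      · filter_upwards [hev0] with x hx
        exact mul_pos (inv_pos.mpr (mem_Ioi.mp hx)) (mem_Ioi.mp hmem)
    exact (contf _ hmem).tendsto.comp path
  have tB : Filter.Tendsto (fun l => hB.cfc (fun x => f (x + (1 - l)))) L
      (nhds (hB.cfc f)) := (contPhiB.tendsto _).comp hvB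
  have tA : Filter.Tendsto (fun l => hA.cfc (fun x => f (l⁻¹ * x))) L
      (nhds (hA.cfc f)) := (contPhiA.tendsto _).comp hvA
  have sc : Filter.Tendsto (fun l : ℝ => (l:ℂ)) L (nhds (1:ℂ)) := by
    simpa using (Complex.continuous_ofReal.tendsto 1).mono_left nhdsWithin_le_nhds
  have tend : Filter.Tendsto (fun l => hB.cfc (fun x => f (x + (1 - l)))
      - (l:ℂ) • hA.cfc (fun x => f (l⁻¹ * x))) L (nhds (hB.cfc f - hA.cfc f)) := by
    have := tB.sub (sc.smul tA)
    simpa using this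
  have hev : ∀ᶠ l in L, l ∈ Ioo (0:ℝ) 1 := by
    have h1 : ∀ᶠ l in L, l ∈ Iio (1:ℝ) := self_mem_nhdsWithin
    have h2 : ∀ᶠ l in L, l ∈ Ioi (0:ℝ) :=
      Filter.Eventually.filter_mono nhdsWithin_le_nhds
        (isOpen_Ioi.eventually_mem (by norm_num : (1:ℝ) ∈ Ioi 0))
    filter_upwards [h1, h2] with x hx1 hx2
    exact ⟨hx2, hx1⟩
  exact psd_limit tend (hev.mono fun x hx => claim x hx)

end
end

section
/- If f : (0,∞) → ℝ is 2-matrix monotone and differentiable, then for all t ≠ s in (0,∞): f'(t)·f'(s) ≥ ((f(t) − f(s))/(t − s))². -/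
open Matrix Set
open scoped ComplexOrder

noncomputable section

open Filter
open scoped Topology

section StmtElevenAux

lemma rc_ofReal (x : ℝ) : (RCLike.ofReal x : ℂ) = Complex.ofReal x := rfl

lemma cfc_linear {n : Type*} [Fintype n] [DecidableEq n] {B : Matrix n n ℂ}
    (hB : B.IsHermitian) (f : ℝ → ℝ) (α β : ℝ)
    (hfg : ∀ i, f (hB.eigenvalues i) = α + β * hB.eigenvalues i) :
    hB.cfc f = (α : ℂ) • 1 + (β : ℂ) • B := by
  have hd : Matrix.diagonal (RCLike.ofReal ∘ f ∘ hB.eigenvalues) =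
      (α : ℂ) • (1 : Matrix n n ℂ) + (β : ℂ) • Matrix.diagonal (RCLike.ofReal ∘ hB.eigenvalues) := by
    ext i j
    rcases eq_or_ne i j with rfl | h
    · simp only [Matrix.diagonal_apply_eq, Matrix.add_apply, Matrix.smul_apply,
        Matrix.one_apply_eq, Function.comp_apply, smul_eq_mul, mul_one]
      rw [hfg i]
      simp only [rc_ofReal, Complex.ofReal_add, Complex.ofReal_mul]
    · simp [diagonal_apply_ne _ h, Matrix.one_apply_ne h]
  rw [Matrix.IsHermitian.cfc, hd, map_add, map_smul, map_smul, map_one]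
  congr 1
  rw [← hB.spectral_theorem]

/-- The perturbed two-by-two matrix. -/
def Bq (t s δ : ℝ) : Matrix (Fin 2) (Fin 2) ℂ :=
  !![((t+δ : ℝ) : ℂ), ((δ : ℝ) : ℂ); ((δ : ℝ) : ℂ), ((s+δ : ℝ) : ℂ)]

lemma Bq_herm (t s δ : ℝ) : (Bq t s δ).IsHermitian := by
  unfold Matrix.IsHermitian Bq
  ext i j
  fin_cases i <;> fin_cases j <;> simp [Matrix.conjTranspose_apply]

def lamP (t s δ : ℝ) : ℝ := (t + s + 2*δ + Real.sqrt ((t-s)^2 + 4*δ^2))/2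
def lamM (t s δ : ℝ) : ℝ := (t + s + 2*δ - Real.sqrt ((t-s)^2 + 4*δ^2))/2
def bcoef (f : ℝ → ℝ) (t s δ : ℝ) : ℝ :=
  (f (lamP t s δ) - f (lamM t s δ)) / (lamP t s δ - lamM t s δ)
def acoef (f : ℝ → ℝ) (t s δ : ℝ) : ℝ := f (lamP t s δ) - bcoef f t s δ * lamP t s δ

lemma sq_nonneg' (t s δ : ℝ) : 0 ≤ (t-s)^2 + 4*δ^2 := by positivity

lemma lam_add (t s δ : ℝ) : lamP t s δ + lamM t s δ = t + s + 2*δ := by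
  unfold lamP lamM; ring

lemma lam_mul (t s δ : ℝ) : lamP t s δ * lamM t s δ = (t+δ)*(s+δ) - δ^2 := by
  unfold lamP lamM
  have h := Real.sq_sqrt (sq_nonneg' t s δ)
  nlinarith [h]

lemma lam_sub (t s δ : ℝ) : lamP t s δ - lamM t s δ = Real.sqrt ((t-s)^2 + 4*δ^2) := by
  unfold lamP lamM; ring

lemma lam_sub_pos {t s : ℝ} (hst : s < t) (δ : ℝ) : 0 < lamP t s δ - lamM t s δ := by
  rw [lam_sub]
  have h : (0:ℝ) < t - s := by linarith
  calc (0:ℝ) < t - s := h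
    _ = Real.sqrt ((t-s)^2) := by rw [Real.sqrt_sq h.le]
    _ ≤ _ := Real.sqrt_le_sqrt (by nlinarith)

lemma lamP_zero {t s : ℝ} (hst : s < t) : lamP t s 0 = t := by
  unfold lamP
  rw [show (t-s)^2 + 4*(0:ℝ)^2 = (t-s)^2 by ring, Real.sqrt_sq (by linarith)]
  ring

lemma lamM_zero {t s : ℝ} (hst : s < t) : lamM t s 0 = s := by
  unfold lamM
  rw [show (t-s)^2 + 4*(0:ℝ)^2 = (t-s)^2 by ring, Real.sqrt_sq (by linarith)]
  ring

lemma lamM_pos {t s δ : ℝ} (hst : s < t) (hs : 0 < s) (hδ : 0 ≤ δ) : 0 < lamM t s δ := by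
  have h1 : Real.sqrt ((t-s)^2 + 4*δ^2) ≤ t - s + 2*δ := by
    rw [show t - s + 2*δ = Real.sqrt ((t-s+2*δ)^2) by
      rw [Real.sqrt_sq (by linarith)]]
    exact Real.sqrt_le_sqrt (by nlinarith)
  unfold lamM; linarith

lemma lamP_pos {t s δ : ℝ} (hst : s < t) (hs : 0 < s) (hδ : 0 ≤ δ) : 0 < lamP t s δ :=
  (lamM_pos hst hs hδ).trans_le (by have := lam_sub_pos hst δ; linarith)

lemma Bq_eig {t s : ℝ} (δ : ℝ) (hst : s < t) (i : Fin 2) :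
    (Bq_herm t s δ).eigenvalues i = lamP t s δ ∨ (Bq_herm t s δ).eigenvalues i = lamM t s δ := by
  set μ := (Bq_herm t s δ).eigenvalues i with hμ
  have h1 : μ ∈ spectrum ℝ (Bq t s δ) := (Bq_herm t s δ).eigenvalues_mem_spectrum_real i
  rw [spectrum.mem_iff] at h1
  have h2 : ¬ IsUnit (algebraMap ℝ (Matrix (Fin 2) (Fin 2) ℂ) μ - Bq t s δ).det := by
    intro h; exact h1 ((Matrix.isUnit_iff_isUnit_det _).mpr h)
  have h3 : (algebraMap ℝ (Matrix (Fin 2) (Fin 2) ℂ) μ - Bq t s δ).det = 0 := by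
    by_contra h; exact h2 (isUnit_iff_ne_zero.mpr h)
  rw [Matrix.det_fin_two] at h3
  have e : ∀ i j : Fin 2, (algebraMap ℝ (Matrix (Fin 2) (Fin 2) ℂ) μ - Bq t s δ) i j
      = (if i = j then (μ:ℂ) else 0) - Bq t s δ i j := by
    intro i j
    simp [Matrix.sub_apply, Matrix.algebraMap_matrix_apply]
  rw [e 0 0, e 1 1, e 0 1, e 1 0] at h3
  simp [Bq] at h3
  have h4 : ((μ - (t+δ)) * (μ - (s+δ)) - δ*δ : ℝ) = 0 := by
    have h3' : (((μ - (t+δ)) * (μ - (s+δ)) - δ*δ : ℝ) : ℂ) = 0 := by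
      push_cast
      linear_combination h3
    exact_mod_cast h3'
  have h5 : (μ - lamP t s δ) * (μ - lamM t s δ) = 0 := by
    have ha := lam_add t s δ
    have hm := lam_mul t s δ
    linear_combination h4 - μ * ha + hm
  rcases mul_eq_zero.mp h5 with h | h
  · left; linarith [sub_eq_zero.mp h]
  · right; linarith [sub_eq_zero.mp h]

lemma Bq_psd (t s : ℝ) {δ : ℝ} (hδ : 0 ≤ δ) : (Bq t s δ - Bq t s 0).PosSemidef := by
  have hE : Bq t s δ - Bq t s 0 = !![(δ:ℂ), δ; δ, δ] := by
    unfold Bq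
    ext i j
    fin_cases i <;> fin_cases j <;> simp
  rw [hE]
  refine Matrix.posSemidef_iff_dotProduct_mulVec.mpr ⟨?_, ?_⟩
  · ext i j
    fin_cases i <;> fin_cases j <;> simp [Matrix.conjTranspose_apply]
  · intro x
    have hcalc : star x ⬝ᵥ (!![(δ:ℂ), δ; δ, δ] *ᵥ x)
        = (δ:ℂ) * ((starRingEnd ℂ) (x 0 + x 1) * (x 0 + x 1)) := by
      simp [Matrix.mulVec, dotProduct, Fin.sum_univ_two, Matrix.vecHead, Matrix.vecTail]
      ring
    rw [hcalc, Complex.conj_mul']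
    rw [show ((δ:ℂ) * ((‖x 0 + x 1‖:ℝ)^2 : ℂ)) = ((δ * ‖x 0 + x 1‖^2 : ℝ) : ℂ) by push_cast; ring]
    rw [Complex.zero_le_real]
    positivity

lemma psd_ineq {t s δ aa' bb' aa0 bb0 : ℝ}
    (h : ((aa':ℂ) • (1 : Matrix (Fin 2) (Fin 2) ℂ) + (bb':ℂ) • Bq t s δ
      - ((aa0:ℂ) • 1 + (bb0:ℂ) • Bq t s 0)).PosSemidef) :
    (bb'*δ)^2 ≤ (aa' + bb'*(t+δ) - (aa0 + bb0*t)) * (aa' + bb'*(s+δ) - (aa0 + bb0*s)) := by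
  set F := aa' + bb'*(t+δ) - (aa0 + bb0*t) with hF
  set G := aa' + bb'*(s+δ) - (aa0 + bb0*s) with hG
  have key : ∀ r : ℝ, 0 ≤ F*(r*r) + (2*(bb'*δ))*r + G := by
    intro r
    have h2 := h.dotProduct_mulVec_nonneg ![(r:ℂ), 1]
    have hq : star ![(r:ℂ), 1] ⬝ᵥ ((( aa':ℂ) • (1 : Matrix (Fin 2) (Fin 2) ℂ) + (bb':ℂ) • Bq t s δ
        - ((aa0:ℂ) • 1 + (bb0:ℂ) • Bq t s 0)) *ᵥ ![(r:ℂ), 1])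
        = ((F*(r*r) + (2*(bb'*δ))*r + G : ℝ) : ℂ) := by
      simp [Bq, Matrix.mulVec, dotProduct, Fin.sum_univ_two, Matrix.vecHead,
        Matrix.vecTail, hF, hG]
      push_cast
      ring
    rw [hq, Complex.zero_le_real] at h2
    exact h2
  have hd := discrim_le_zero key
  rw [discrim] at hd
  nlinarith [hd]

lemma interp {f : ℝ → ℝ} {t s : ℝ} (hst : s < t) (δ : ℝ) {x : ℝ}
    (hx : x = lamP t s δ ∨ x = lamM t s δ) :
    f x = acoef f t s δ + bcoef f t s δ * x := by
  have hne := (lam_sub_pos hst δ).ne'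
  rcases hx with rfl | rfl
  · unfold acoef; ring
  · unfold acoef bcoef
    field_simp
    ring

lemma cfc_Bq {f : ℝ → ℝ} {t s : ℝ} (hst : s < t) (δ : ℝ) :
    (Bq_herm t s δ).cfc f = (acoef f t s δ : ℂ) • 1 + (bcoef f t s δ : ℂ) • Bq t s δ :=
  cfc_linear (Bq_herm t s δ) f _ _ (fun i => interp hst δ (Bq_eig δ hst i))

lemma hq_deriv {t s : ℝ} (hst : s < t) :
    HasDerivAt (fun δ : ℝ => Real.sqrt ((t-s)^2 + 4*δ^2)) 0 0 := by
  have h0 : ((t-s)^2 + 4*(0:ℝ)^2) ≠ 0 := by nlinarith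
  have hinner : HasDerivAt (fun δ : ℝ => (t-s)^2 + 4*δ^2) 0 0 := by
    have := ((hasDerivAt_pow 2 (0:ℝ)).const_mul 4).const_add ((t-s)^2)
    simpa using this
  have := (Real.hasDerivAt_sqrt h0).comp 0 hinner
  simp at this; exact this

lemma hL_deriv {t s : ℝ} (hst : s < t) : HasDerivAt (lamP t s) 1 0 := by
  have h : HasDerivAt (fun δ : ℝ => (t + s + 2*δ + Real.sqrt ((t-s)^2 + 4*δ^2))/2)
      ((2*1 + 0)/2) 0 := by
    exact ((((hasDerivAt_id (0:ℝ)).const_mul 2).const_add (t+s)).add (hq_deriv hst)).div_const 2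
  simp at h; exact h

lemma hl_deriv {t s : ℝ} (hst : s < t) : HasDerivAt (lamM t s) 1 0 := by
  have h : HasDerivAt (fun δ : ℝ => (t + s + 2*δ - Real.sqrt ((t-s)^2 + 4*δ^2))/2)
      ((2*1 - 0)/2) 0 := by
    exact ((((hasDerivAt_id (0:ℝ)).const_mul 2).const_add (t+s)).sub (hq_deriv hst)).div_const 2
  simp at h; exact h

lemma hu_deriv {f : ℝ → ℝ} {t s : ℝ} (hst : s < t) (hft : DifferentiableAt ℝ f t) :
    HasDerivAt (fun δ => f (lamP t s δ)) (deriv f t) 0 := by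
  have hf' : HasDerivAt f (deriv f t) (lamP t s 0) := by
    rw [lamP_zero hst]; exact hft.hasDerivAt
  have h := HasDerivAt.comp (𝕜 := ℝ) 0 hf' (hL_deriv hst)
  simp at h; exact h

lemma hv_deriv {f : ℝ → ℝ} {t s : ℝ} (hst : s < t) (hfs : DifferentiableAt ℝ f s) :
    HasDerivAt (fun δ => f (lamM t s δ)) (deriv f s) 0 := by
  have hf' : HasDerivAt f (deriv f s) (lamM t s 0) := by
    rw [lamM_zero hst]; exact hfs.hasDerivAt
  have h := HasDerivAt.comp (𝕜 := ℝ) 0 hf' (hl_deriv hst)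
  simp at h; exact h

lemma hwP_deriv {t s : ℝ} (hst : s < t) :
    HasDerivAt (fun δ => (t + δ - lamP t s δ)/(lamP t s δ - lamM t s δ)) 0 0 := by
  have hnum : HasDerivAt (fun δ : ℝ => t + δ - lamP t s δ) (1 - 1) 0 :=
    ((hasDerivAt_id (0:ℝ)).const_add t).sub (hL_deriv hst)
  have hden : HasDerivAt (fun δ : ℝ => lamP t s δ - lamM t s δ) (1 - 1) 0 :=
    (hL_deriv hst).sub (hl_deriv hst)
  have hd0 : lamP t s 0 - lamM t s 0 ≠ 0 := by
    rw [lamP_zero hst, lamM_zero hst]; intro h; linarith [sub_eq_zero.mp h]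
  have h := hnum.div hden hd0
  simp [lamP_zero hst, lamM_zero hst] at h; exact h

lemma hwM_deriv {t s : ℝ} (hst : s < t) :
    HasDerivAt (fun δ => (s + δ - lamM t s δ)/(lamP t s δ - lamM t s δ)) 0 0 := by
  have hnum : HasDerivAt (fun δ : ℝ => s + δ - lamM t s δ) (1 - 1) 0 :=
    ((hasDerivAt_id (0:ℝ)).const_add s).sub (hl_deriv hst)
  have hden : HasDerivAt (fun δ : ℝ => lamP t s δ - lamM t s δ) (1 - 1) 0 :=
    (hL_deriv hst).sub (hl_deriv hst)
  have hd0 : lamP t s 0 - lamM t s 0 ≠ 0 := by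
    rw [lamP_zero hst, lamM_zero hst]; intro h; linarith [sub_eq_zero.mp h]
  have h := hnum.div hden hd0
  simp [lamP_zero hst, lamM_zero hst] at h; exact h

lemma hFF_deriv {f : ℝ → ℝ} {t s : ℝ} (hst : s < t) (hft : DifferentiableAt ℝ f t)
    (hfs : DifferentiableAt ℝ f s) :
    HasDerivAt (fun δ => f (lamP t s δ) + (f (lamP t s δ) - f (lamM t s δ)) *
    ((t + δ - lamP t s δ)/(lamP t s δ - lamM t s δ)) - f t) (deriv f t) 0 := by
  have h := ((hu_deriv hst hft).add
    (((hu_deriv hst hft).sub (hv_deriv hst hfs)).mul (hwP_deriv hst))).sub_const (f t)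
  simpa [lamP_zero hst] using h

lemma hGG_deriv {f : ℝ → ℝ} {t s : ℝ} (hst : s < t) (hft : DifferentiableAt ℝ f t)
    (hfs : DifferentiableAt ℝ f s) :
    HasDerivAt (fun δ => f (lamM t s δ) + (f (lamP t s δ) - f (lamM t s δ)) *
    ((s + δ - lamM t s δ)/(lamP t s δ - lamM t s δ)) - f s) (deriv f s) 0 := by
  have h := ((hv_deriv hst hfs).add
    (((hu_deriv hst hft).sub (hv_deriv hst hfs)).mul (hwM_deriv hst))).sub_const (f s)
  simpa [lamM_zero hst] using h

lemma key_ineq (f : ℝ → ℝ) (hf : MatMonoOn 2 (Ioi 0) f)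
    (hdiff : ∀ t ∈ Ioi (0:ℝ), DifferentiableAt ℝ f t)
    (t s : ℝ) (hs : 0 < s) (hst : s < t) :
    ((f t - f s) / (t - s)) ^ 2 ≤ deriv f t * deriv f s := by
  have ht : 0 < t := hs.trans hst
  have hft := hdiff t ht
  have hfs := hdiff s hs
  -- the two diagonal entries of the PSD difference
  set FF : ℝ → ℝ := fun δ => acoef f t s δ + bcoef f t s δ * (t+δ) - f t with hFFdef
  set GG : ℝ → ℝ := fun δ => acoef f t s δ + bcoef f t s δ * (s+δ) - f s with hGGdef
  -- Step 1: the matrix-monotonicity inequality for each positive δ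
  have step1 : ∀ δ : ℝ, δ ∈ Ioi (0:ℝ) → (bcoef f t s δ)^2 ≤ (FF δ/δ) * (GG δ/δ) := by
    intro δ hδ
    have hδ0 : (0:ℝ) < δ := hδ
    have heig : ∀ (d : ℝ), 0 ≤ d → ∀ i, (Bq_herm t s d).eigenvalues i ∈ Ioi (0:ℝ) := by
      intro d hd i
      rcases Bq_eig d hst i with h | h <;> rw [h]
      · exact lamP_pos hst hs hd
      · exact lamM_pos hst hs hd
    have hpsd := hf (Bq t s 0) (Bq t s δ) (Bq_herm t s 0) (Bq_herm t s δ)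
      (heig 0 le_rfl) (heig δ hδ0.le) (Bq_psd t s hδ0.le)
    rw [cfc_Bq hst δ, cfc_Bq hst 0] at hpsd
    have h2 := psd_ineq hpsd
    have hat : acoef f t s 0 + bcoef f t s 0 * t = f t :=
      (interp hst 0 (Or.inl (lamP_zero hst).symm)).symm
    have has : acoef f t s 0 + bcoef f t s 0 * s = f s :=
      (interp hst 0 (Or.inr (lamM_zero hst).symm)).symm
    rw [hat, has] at h2
    have hδ2 : (0:ℝ) < δ^2 := by positivity
    calc (bcoef f t s δ)^2 = (bcoef f t s δ * δ)^2 / δ^2 := by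
          field_simp
      _ ≤ (FF δ * GG δ) / δ^2 := by
          gcongr

      _ = (FF δ/δ) * (GG δ/δ) := by
          rw [div_mul_div_comm, sq]
  -- Step 2: limits
  have hne0 : lamP t s 0 - lamM t s 0 ≠ 0 := by
    rw [lamP_zero hst, lamM_zero hst]; intro h; linarith [sub_eq_zero.mp h]
  have hFFeq : FF = fun δ => f (lamP t s δ) + (f (lamP t s δ) - f (lamM t s δ)) *
      ((t + δ - lamP t s δ)/(lamP t s δ - lamM t s δ)) - f t := by
    funext δ
    have hne := (lam_sub_pos hst δ).ne'
    simp only [hFFdef]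
    unfold acoef bcoef
    field_simp
    ring
  have hGGeq : GG = fun δ => f (lamM t s δ) + (f (lamP t s δ) - f (lamM t s δ)) *
      ((s + δ - lamM t s δ)/(lamP t s δ - lamM t s δ)) - f s := by
    funext δ
    have hne := (lam_sub_pos hst δ).ne'
    simp only [hGGdef]
    unfold acoef bcoef
    field_simp
    ring
  have hFF0 : FF 0 = 0 := by
    rw [hFFeq]
    simp [lamP_zero hst]
  have hGG0 : GG 0 = 0 := by
    rw [hGGeq]
    simp [lamM_zero hst]
  have hFFd : HasDerivAt FF (deriv f t) 0 := by rw [hFFeq]; exact hFF_deriv hst hft hfs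
  have hGGd : HasDerivAt GG (deriv f s) 0 := by rw [hGGeq]; exact hGG_deriv hst hft hfs
  have hmono : 𝓝[>] (0:ℝ) ≤ 𝓝[≠] (0:ℝ) :=
    nhdsWithin_mono 0 (fun x hx => ne_of_gt hx)
  have hFFlim : Tendsto (fun δ => FF δ / δ) (𝓝[>] (0:ℝ)) (𝓝 (deriv f t)) := by
    have h1 : Tendsto (slope FF 0) (𝓝[>] (0:ℝ)) (𝓝 (deriv f t)) :=
      (hasDerivAt_iff_tendsto_slope.mp hFFd).mono_left hmono
    refine h1.congr (fun δ => ?_)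
    rw [slope_def_field, hFF0]
    simp [div_eq_div_iff]
  have hGGlim : Tendsto (fun δ => GG δ / δ) (𝓝[>] (0:ℝ)) (𝓝 (deriv f s)) := by
    have h1 : Tendsto (slope GG 0) (𝓝[>] (0:ℝ)) (𝓝 (deriv f s)) :=
      (hasDerivAt_iff_tendsto_slope.mp hGGd).mono_left hmono
    refine h1.congr (fun δ => ?_)
    rw [slope_def_field, hGG0]
    simp [div_eq_div_iff]
  have hbb : Tendsto (fun δ => bcoef f t s δ) (𝓝 (0:ℝ)) (𝓝 ((f t - f s)/(t - s))) := by
    have hc : ContinuousAt (fun δ => (f (lamP t s δ) - f (lamM t s δ)) /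
        (lamP t s δ - lamM t s δ)) 0 :=
      ((hu_deriv hst hft).continuousAt.sub (hv_deriv hst hfs).continuousAt).div
        ((hL_deriv hst).continuousAt.sub (hl_deriv hst).continuousAt) hne0
    have := hc.tendsto
    rw [lamP_zero hst, lamM_zero hst] at this
    exact this
  have hbb2 : Tendsto (fun δ => (bcoef f t s δ)^2) (𝓝[>] (0:ℝ))
      (𝓝 (((f t - f s)/(t - s))^2)) :=
    ((hbb.mono_left nhdsWithin_le_nhds).pow 2)
  have hprod : Tendsto (fun δ => (FF δ/δ) * (GG δ/δ)) (𝓝[>] (0:ℝ))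
      (𝓝 (deriv f t * deriv f s)) := hFFlim.mul hGGlim
  exact le_of_tendsto_of_tendsto hbb2 hprod
    (eventually_nhdsWithin_of_forall step1)

end StmtElevenAux

theorem stmt11 (f : ℝ → ℝ) (hf : MatMonoOn 2 (Ioi 0) f)
    (hdiff : ∀ t ∈ Ioi (0:ℝ), DifferentiableAt ℝ f t)
    (t s : ℝ) (ht : 0 < t) (hs : 0 < s) (hts : t ≠ s) :
    ((f t - f s) / (t - s)) ^ 2 ≤ deriv f t * deriv f s := by
  rcases hts.lt_or_gt with h | h
  · rw [show (f t - f s) / (t - s) = (f s - f t) / (s - t) by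
      rw [← neg_sub (f s), ← neg_sub s, neg_div_neg_eq]]
    rw [mul_comm]
    exact key_ineq f hf hdiff s t ht h
  · exact key_ineq f hf hdiff t s hs h

end
end
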